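/- The growth function of tree automorphisms satisfies Γ_{α^{-1}} = Γ_α and Γ_{αβ}(n) ≤ Γ_α(n) + Γ_β(n) for all α, β ∈ Aut(T(X)) and all n; consequently, for every d ≥ −1 the set B_d of automorphisms whose growth function is bounded above by a polynomial of degree d forms a subgroup of Aut(T(X)). -/

import Mathlib

open List

/-! ### The automorphism group of the rooted tree `T(X)` -/

/-- A permutation of the vertex set `X*` of the rooted tree `T(X)` is a tree
automorphism iff it preserves the length of words and the prefix relation. -/
def IsTreeAut {X : Type*} (f : Equiv.Perm (List X)) : Prop :=
  (∀ w : List X, (f w).length = w.length) ∧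
    ∀ u v : List X, u <+: v → f u <+: f v

/-- The automorphism group `Aut(T(X))` of the rooted tree `T(X)`, realized as a
subgroup of the permutation group of the vertex set `X*`. -/
def treeAut (X : Type*) : Subgroup (Equiv.Perm (List X)) where
  carrier := {f | IsTreeAut f}
  one_mem' := ⟨fun _ => rfl, fun _ _ h => h⟩
  mul_mem' := by
    rintro f g ⟨hf1, hf2⟩ ⟨hg1, hg2⟩
    refine ⟨fun w => ?_, fun u v h => ?_⟩
    · simp only [Equiv.Perm.coe_mul, Function.comp_apply]
      rw [hf1, hg1]
    · simpa using hf2 _ _ (hg2 _ _ h)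
  inv_mem' := by
    rintro f ⟨hf1, hf2⟩
    have hlen : ∀ w : List X, (f⁻¹ w).length = w.length := by
      intro w
      have h := hf1 (f⁻¹ w)
      rw [show ∀ x, f (f⁻¹ x) = x from f.apply_symm_apply] at h
      exact h.symm
    refine ⟨hlen, fun u v h => ?_⟩
    set t := (f⁻¹ v).take (f⁻¹ u).length with ht
    have htp : t <+: f⁻¹ v := take_prefix _ _
    have h2 : f t <+: v := by
      have := hf2 _ _ htp
      rwa [show ∀ x, f (f⁻¹ x) = x from f.apply_symm_apply] at this
    have hlt : (f t).length = u.length := by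
      rw [hf1, ht, length_take, hlen, hlen]
      exact min_eq_left h.length_le
    have hfu : f t = u :=
      (prefix_of_prefix_length_le h2 h hlt.le).eq_of_length hlt
    have : t = f⁻¹ u := by
      rw [← hfu, show ∀ x, f⁻¹ (f x) = x from f.symm_apply_apply]
    rwa [this] at htp

lemma mem_treeAut {X : Type*} {f : Equiv.Perm (List X)} :
    f ∈ treeAut X ↔ IsTreeAut f := Iff.rfl

/-! ### States, automatic and bounded automorphisms -/

/-- The state (section/restriction) of `f` at the vertex `w` of the tree:
`f (w ++ v) = f w ++ state f w v` for a tree automorphism `f`. -/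
def state {X : Type*} (f : List X → List X) (w : List X) : List X → List X :=
  fun v => (f (w ++ v)).drop w.length

/-- An endomorphism of `X*` is automatic if it has only finitely many states. -/
def IsAutomatic {X : Type*} (f : List X → List X) : Prop :=
  (Set.range fun w : List X => state f w).Finite

/-- An endomorphism of `X*` is bounded if the number of words of length `n`
with non-trivial state is bounded uniformly in `n`. -/
def IsBounded {X : Type*} (f : List X → List X) : Prop :=
  ∃ C : ℕ, ∀ n : ℕ,
    {w : List X | w.length = n ∧ state f w ≠ id}.ncard ≤ C

lemma IsTreeAut.apply_append {X : Type*} {f : Equiv.Perm (List X)}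
    (hf : IsTreeAut f) (w v : List X) :
    f (w ++ v) = f w ++ state (⇑f) w v := by
  obtain ⟨t, ht⟩ := hf.2 w (w ++ v) (prefix_append w v)
  have hl : (f w).length = w.length := hf.1 w
  have hst : state (⇑f) w v = t := by
    unfold state
    rw [← ht, ← hl, List.drop_left]
  rw [hst, ht]

lemma state_one {X : Type*} (w : List X) :
    state (⇑(1 : Equiv.Perm (List X))) w = id := by
  funext v
  simp [state]

lemma state_mul {X : Type*} {f g : Equiv.Perm (List X)}
    (hf : IsTreeAut f) (hg : IsTreeAut g) (w : List X) :
    state (⇑(f * g)) w = state (⇑f) (g w) ∘ state (⇑g) w := by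
  funext v
  have h1 : (⇑(f * g)) (w ++ v) = f (g (w ++ v)) := rfl
  show ((f * g) (w ++ v)).drop w.length = _
  rw [h1, hg.apply_append, hf.apply_append]
  have hl : (f (g w)).length = w.length := by rw [hf.1, hg.1]
  rw [← hl, List.drop_left]
  rfl

lemma state_inv_comp {X : Type*} {f : Equiv.Perm (List X)}
    (hf : IsTreeAut f) (hfi : IsTreeAut f⁻¹) (u : List X) :
    state (⇑f⁻¹) u ∘ state (⇑f) (f⁻¹ u) = id ∧
      state (⇑f) (f⁻¹ u) ∘ state (⇑f⁻¹) u = id := by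
  constructor
  · funext v
    have h1 : f (f⁻¹ u ++ v) = u ++ state (⇑f) (f⁻¹ u) v := by
      rw [hf.apply_append, show ∀ x, f (f⁻¹ x) = x from f.apply_symm_apply]
    have h2 : f⁻¹ (u ++ state (⇑f) (f⁻¹ u) v)
        = f⁻¹ u ++ state (⇑f⁻¹) u (state (⇑f) (f⁻¹ u) v) := hfi.apply_append _ _
    rw [← h1, show ∀ x, f⁻¹ (f x) = x from f.symm_apply_apply] at h2
    simp only [Function.comp_apply, id_eq]
    exact (List.append_cancel_left h2).symm
  · funext v
    have h1 : f⁻¹ (u ++ v) = f⁻¹ u ++ state (⇑f⁻¹) u v := hfi.apply_append _ _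
    have h2 : f (f⁻¹ u ++ state (⇑f⁻¹) u v)
        = f (f⁻¹ u) ++ state (⇑f) (f⁻¹ u) (state (⇑f⁻¹) u v) := hf.apply_append _ _
    rw [← h1, show ∀ x, f (f⁻¹ x) = x from f.apply_symm_apply, show ∀ x, f (f⁻¹ x) = x from f.apply_symm_apply] at h2
    simp only [Function.comp_apply, id_eq]
    exact (List.append_cancel_left h2).symm

/-- The growth function `Γ_α(n) = |{w ∈ X^n : α_w ≠ 1}|` of an endomorphism of
`X*`. -/
noncomputable def growth {X : Type*} (f : List X → List X) (n : ℕ) : ℕ :=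
  {w : List X | w.length = n ∧ state f w ≠ id}.ncard

/-- The class `B_d` of tree automorphisms whose growth function is bounded by
a polynomial of degree `d`; for `d = -1` these are the finitary automorphisms
(growth eventually `0`). -/
def growthClass (X : Type*) (d : ℤ) : Set (Equiv.Perm (List X)) :=
  {α | α ∈ treeAut X ∧
    if d < 0 then ∃ n₀ : ℕ, ∀ n : ℕ, n₀ ≤ n → growth ⇑α n = 0
    else ∃ C : ℕ, ∀ n : ℕ, 1 ≤ n → growth ⇑α n ≤ C * n ^ d.toNat}

section Aux

variable {X : Type*} [Finite X]

lemma growthSet_finite (f : List X → List X) (n : ℕ) :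
    {w : List X | w.length = n ∧ state f w ≠ id}.Finite :=
  (List.finite_length_eq X n).subset fun _ h => h.1

lemma state_inv_ne_iff {f : Equiv.Perm (List X)} (hf : IsTreeAut f)
    (hfi : IsTreeAut f⁻¹) (u : List X) :
    state (⇑f⁻¹) u ≠ id ↔ state (⇑f) (f⁻¹ u) ≠ id := by
  obtain ⟨h1, h2⟩ := state_inv_comp hf hfi u
  constructor
  · intro h hc
    apply h
    rw [← h1, hc, Function.comp_id]
  · intro h hc
    apply h
    rw [← h2, hc, Function.comp_id]

lemma image_growthSet {f : Equiv.Perm (List X)} (hf : IsTreeAut f)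
    (hfi : IsTreeAut f⁻¹) (n : ℕ) :
    ⇑f '' {w : List X | w.length = n ∧ state (⇑f) w ≠ id} =
      {u : List X | u.length = n ∧ state (⇑f⁻¹) u ≠ id} := by
  ext u
  have hmem : u ∈ ⇑f '' {w : List X | w.length = n ∧ state (⇑f) w ≠ id} ↔
      f⁻¹ u ∈ {w : List X | w.length = n ∧ state (⇑f) w ≠ id} := by
    constructor
    · rintro ⟨w, hw, rfl⟩
      rwa [show ∀ x, f⁻¹ (f x) = x from f.symm_apply_apply]
    · intro h
      exact ⟨f⁻¹ u, h, f.apply_symm_apply u⟩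
  rw [hmem]
  simp only [Set.mem_setOf_eq, hfi.1 u, state_inv_ne_iff hf hfi]

lemma growth_inv {f : Equiv.Perm (List X)} (hf : f ∈ treeAut X) :
    growth (⇑f⁻¹) = growth ⇑f := by
  funext n
  unfold growth
  rw [← image_growthSet hf ((treeAut X).inv_mem hf) n,
    Set.ncard_image_of_injective _ f.injective]

lemma growth_mul_le {f g : Equiv.Perm (List X)} (hf : f ∈ treeAut X)
    (hg : g ∈ treeAut X) (n : ℕ) :
    growth (⇑(f * g)) n ≤ growth ⇑f n + growth ⇑g n := by
  have hsub : {w : List X | w.length = n ∧ state (⇑(f * g)) w ≠ id} ⊆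
      {w : List X | w.length = n ∧ state (⇑f) (g w) ≠ id} ∪
        {w : List X | w.length = n ∧ state (⇑g) w ≠ id} := by
    rintro w ⟨hl, hs⟩
    by_cases h1 : state (⇑g) w = id
    · left
      refine ⟨hl, fun h2 => hs ?_⟩
      rw [state_mul hf hg, h1, h2, Function.comp_id]
    · right; exact ⟨hl, h1⟩
  have h1 : {w : List X | w.length = n ∧ state (⇑f) (g w) ≠ id}.ncard =
      growth ⇑f n := by
    unfold growth
    rw [← Set.ncard_image_of_injective
      {w : List X | w.length = n ∧ state (⇑f) (g w) ≠ id} g.injective]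
    congr 1
    ext u
    constructor
    · rintro ⟨w, ⟨hl, hs⟩, rfl⟩
      exact ⟨(hg.1 w).trans hl, hs⟩
    · rintro ⟨hl, hs⟩
      refine ⟨g⁻¹ u, ⟨?_, ?_⟩, g.apply_symm_apply u⟩
      · rw [((treeAut X).inv_mem hg).1 u]; exact hl
      · rwa [show ∀ x, g (g⁻¹ x) = x from g.apply_symm_apply]
  calc growth (⇑(f * g)) n
      ≤ ({w : List X | w.length = n ∧ state (⇑f) (g w) ≠ id} ∪
        {w : List X | w.length = n ∧ state (⇑g) w ≠ id}).ncard :=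
        Set.ncard_le_ncard hsub (((List.finite_length_eq X n).subset
          fun _ h => h.1).union (growthSet_finite _ n))
    _ ≤ _ := by
        rw [← h1]
        exact Set.ncard_union_le _ _

lemma growth_one (n : ℕ) :
    growth (⇑(1 : Equiv.Perm (List X))) n = 0 := by
  unfold growth
  have h : {w : List X | w.length = n ∧ state (⇑(1 : Equiv.Perm (List X))) w ≠ id}
      = ∅ := by
    ext w
    simp only [Set.mem_setOf_eq, Set.mem_empty_iff_false, iff_false, not_and]
    exact fun _ => not_not_intro (state_one w)
  rw [h, Set.ncard_empty]

end Aux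

/-- The growth function is symmetric and subadditive, and consequently, for
every `d ≥ -1`, the class `B_d` forms a subgroup of `Aut(T(X))`. -/
theorem growth_symm_subadd_and_subgroup (X : Type*) [Finite X] :
    (∀ α : Equiv.Perm (List X), α ∈ treeAut X → growth (⇑α⁻¹) = growth ⇑α) ∧
    (∀ α β : Equiv.Perm (List X), α ∈ treeAut X → β ∈ treeAut X →
      ∀ n : ℕ, growth (⇑(α * β)) n ≤ growth ⇑α n + growth ⇑β n) ∧
    (∀ d : ℤ, -1 ≤ d → ∃ H : Subgroup (Equiv.Perm (List X)),
      (H : Set (Equiv.Perm (List X))) = growthClass X d) := by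
  refine ⟨fun α hα => growth_inv hα, fun α β hα hβ n => growth_mul_le hα hβ n,
    fun d _ => ?_⟩
  refine ⟨{ carrier := growthClass X d
            mul_mem' := ?_
            one_mem' := ?_
            inv_mem' := ?_ }, rfl⟩
  case refine_2 =>
    refine ⟨(treeAut X).one_mem, ?_⟩
    split_ifs
    · exact ⟨0, fun n _ => growth_one n⟩
    · exact ⟨0, fun n _ => (growth_one n).le.trans (Nat.zero_le _)⟩
  case refine_1 =>
    rintro f g ⟨hf, hf2⟩ ⟨hg, hg2⟩
    refine ⟨(treeAut X).mul_mem hf hg, ?_⟩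
    split_ifs at hf2 hg2 ⊢ with h
    · obtain ⟨n₀, h₀⟩ := hf2
      obtain ⟨n₁, h₁⟩ := hg2
      refine ⟨max n₀ n₁, fun n hn => ?_⟩
      have := growth_mul_le hf hg n
      rw [h₀ n (le_trans (le_max_left _ _) hn),
        h₁ n (le_trans (le_max_right _ _) hn)] at this
      omega
    · obtain ⟨C₁, h₁⟩ := hf2
      obtain ⟨C₂, h₂⟩ := hg2
      refine ⟨C₁ + C₂, fun n hn => ?_⟩
      calc growth (⇑(f * g)) n ≤ growth ⇑f n + growth ⇑g n :=
            growth_mul_le hf hg n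
        _ ≤ C₁ * n ^ d.toNat + C₂ * n ^ d.toNat :=
            Nat.add_le_add (h₁ n hn) (h₂ n hn)
        _ = (C₁ + C₂) * n ^ d.toNat := (Nat.add_mul _ _ _).symm
  case refine_3 =>
    rintro f ⟨hf, hf2⟩
    refine ⟨(treeAut X).inv_mem hf, ?_⟩
    rw [growth_inv hf]
    exact hf2
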